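/- arXiv:2207.01392 — 3 statements merged into one kernel-verified Lean document; each statement's English description precedes it below -/
import Mathlib

section
/- If f(y) = (4/3)·((1 + sqrt(y))^(3/2) − 1) + 2·sqrt(y) and y = f⁻¹ denotes its inverse function on [0,∞), then y is differentiable on (0,∞) and satisfies y'(s) + 1 = sqrt(1 + sqrt(y(s))) for all s > 0, with y(0) = 0. -/
noncomputable def f (y : ℝ) : ℝ :=
  4 / 3 * ((1 + Real.sqrt y) ^ ((3 : ℝ) / 2) - 1) + 2 * Real.sqrt y

lemma f_zero : f 0 = 0 := by
  simp [f, Real.sqrt_zero]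

lemma f_strictMonoOn : StrictMonoOn f (Set.Ici (0 : ℝ)) := by
  intro a ha b hb hab
  have h1 : Real.sqrt a < Real.sqrt b := Real.sqrt_lt_sqrt ha hab
  have h2 : (1 + Real.sqrt a) ^ ((3 : ℝ) / 2) < (1 + Real.sqrt b) ^ ((3 : ℝ) / 2) := by
    apply Real.rpow_lt_rpow (by positivity) (by linarith) (by norm_num)
  unfold f
  nlinarith

lemma f_hasDerivAt {t : ℝ} (ht : 0 < t) :
    HasDerivAt f ((Real.sqrt (1 + Real.sqrt t) + 1) / Real.sqrt t) t := by
  have hst : 0 < Real.sqrt t := Real.sqrt_pos.mpr ht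
  have hsq : HasDerivAt Real.sqrt (1 / (2 * Real.sqrt t)) t :=
    Real.hasDerivAt_sqrt (ne_of_gt ht)
  have h1 : HasDerivAt (fun x => 1 + Real.sqrt x) (1 / (2 * Real.sqrt t)) t := by
    simpa using hsq
  have h2 : HasDerivAt (fun x => (1 + Real.sqrt x) ^ ((3 : ℝ) / 2))
      (1 / (2 * Real.sqrt t) * ((3:ℝ)/2) * (1 + Real.sqrt t) ^ ((3:ℝ)/2 - 1)) t := by
    simpa [mul_comm, mul_assoc, mul_left_comm] using
      h1.rpow_const (p := (3:ℝ)/2) (Or.inl (by positivity))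
  have h3 : HasDerivAt f
      (4/3 * (1 / (2 * Real.sqrt t) * ((3:ℝ)/2) * (1 + Real.sqrt t) ^ ((3:ℝ)/2 - 1))
        + 2 * (1 / (2 * Real.sqrt t))) t := by
    unfold f
    exact (((h2.sub_const 1).const_mul (4/3)).add (hsq.const_mul 2))
  convert h3 using 1
  have : ((3:ℝ)/2 - 1) = (1:ℝ)/2 := by norm_num
  rw [this]
  rw [show (1 + Real.sqrt t) ^ ((1:ℝ)/2) = Real.sqrt (1 + Real.sqrt t) from
    (Real.sqrt_eq_rpow _).symm]
  field_simp
  ring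

/-- the inverse y = f⁻¹ of f on [0,∞) is differentiable on (0,∞),
satisfies y'(s) + 1 = √(1 + √(y s)) for all s > 0, and y 0 = 0. -/
theorem inverse_solves_ODE (y : ℝ → ℝ)
    (hy_nonneg : ∀ s ∈ Set.Ici (0 : ℝ), y s ∈ Set.Ici (0 : ℝ))
    (h_left : ∀ t ∈ Set.Ici (0 : ℝ), y (f t) = t)
    (h_right : ∀ s ∈ Set.Ici (0 : ℝ), f (y s) = s) :
    y 0 = 0 ∧
    ∀ s : ℝ, 0 < s →
      HasDerivAt y (Real.sqrt (1 + Real.sqrt (y s)) - 1) s := by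
  have hy0 : y 0 = 0 := by
    have := h_left 0 Set.self_mem_Ici
    rwa [f_zero] at this
  refine ⟨hy0, fun s hs => ?_⟩
  have hys_nonneg : 0 ≤ y s := hy_nonneg s hs.le
  have hys_pos : 0 < y s := by
    rcases lt_or_eq_of_le hys_nonneg with h | h
    · exact h
    · exfalso
      have := h_right s hs.le
      rw [← h, f_zero] at this
      linarith
  -- y is strictly monotone on Ioi 0
  have hmono : StrictMonoOn y (Set.Ioi (0:ℝ)) := by
    intro a ha b hb hab
    by_contra hle
    push_neg at hle
    have h1 : f (y b) ≤ f (y a) :=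
      f_strictMonoOn.monotoneOn (hy_nonneg b (Set.mem_Ici.mpr (le_of_lt hb))) (hy_nonneg a (Set.mem_Ici.mpr (le_of_lt ha))) hle
    rw [h_right a (Set.mem_Ici.mpr (le_of_lt ha)), h_right b (Set.mem_Ici.mpr (le_of_lt hb))] at h1
    linarith
  -- image of Ioi 0 under y contains Ioi 0
  have himg : Set.Ioi (0:ℝ) ⊆ y '' Set.Ioi (0:ℝ) := by
    intro t ht
    refine ⟨f t, ?_, h_left t (Set.mem_Ici.mpr (le_of_lt ht))⟩
    have := f_strictMonoOn (Set.self_mem_Ici) (Set.mem_Ici.mpr (le_of_lt ht)) ht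
    rwa [f_zero] at this
  have hcont : ContinuousAt y s :=
    hmono.continuousAt_of_image_mem_nhds (Ioi_mem_nhds hs)
      (Filter.mem_of_superset (Ioi_mem_nhds hys_pos) himg)
  have hfd := f_hasDerivAt hys_pos
  have hne : (Real.sqrt (1 + Real.sqrt (y s)) + 1) / Real.sqrt (y s) ≠ 0 := by
    have := Real.sqrt_pos.mpr hys_pos
    positivity
  have hev : ∀ᶠ x in nhds s, f (y x) = x := by
    filter_upwards [Ioi_mem_nhds hs] with x hx
    exact h_right x (Set.mem_Ici.mpr (le_of_lt hx))
  have hd := hfd.of_local_left_inverse hcont hne hev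
  refine hd.congr_deriv ?_
  set u := Real.sqrt (1 + Real.sqrt (y s)) with hu
  have hst : 0 < Real.sqrt (y s) := Real.sqrt_pos.mpr hys_pos
  have hu2 : u ^ 2 = 1 + Real.sqrt (y s) := Real.sq_sqrt (by positivity)
  have hupos : 0 < u := Real.sqrt_pos.mpr (by positivity)
  symm
  rw [inv_div, eq_div_iff (by positivity)]
  nlinarith
end

section
/- Every point of the open set A = {(t,x) ∈ ℝ² : x > 0 and 0 < t − x < f⁻¹(x)} lies in the causal future J⁺(0) of the origin with respect to g = −dt² + (1 + sqrt((t−|x|)₊))dx². -/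
noncomputable def rho (t x : ℝ) : ℝ := 1 + Real.sqrt (max (t - |x|) 0)

/-- every point of A = {(t,x) : x > 0, 0 < t − x < f⁻¹(x)} lies
in the causal future J⁺(0) of the origin: it is reachable from (0,0) by a
future-directed Lipschitz causal curve. -/
theorem A_subset_causal_future (finv : ℝ → ℝ)
    (h_nonneg : ∀ s ∈ Set.Ici (0 : ℝ), finv s ∈ Set.Ici (0 : ℝ))
    (h_left : ∀ t ∈ Set.Ici (0 : ℝ), finv (f t) = t)
    (h_right : ∀ s ∈ Set.Ici (0 : ℝ), f (finv s) = s) :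
    ∀ p : ℝ × ℝ, 0 < p.2 → 0 < p.1 - p.2 → p.1 - p.2 < finv p.2 →
      ∃ (T : ℝ) (γ : ℝ → ℝ × ℝ) (K : NNReal), 0 < T ∧
        LipschitzOnWith K γ (Set.Icc 0 T) ∧
        γ 0 = (0, 0) ∧ γ T = p ∧
        MonotoneOn (fun s => (γ s).1) (Set.Icc 0 T) ∧
        (∀ᵐ s ∂(MeasureTheory.volume.restrict (Set.Icc (0 : ℝ) T)),
          -(deriv (fun s => (γ s).1) s) ^ 2 +
            rho (γ s).1 (γ s).2 * (deriv (fun s => (γ s).2) s) ^ 2 ≤ 0) := by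
  rintro ⟨t, x⟩ hx ht _
  simp only at hx ht ⊢
  refine ⟨t, fun s => (s, min s x), 1, by linarith, ?_, ?_, ?_, ?_, ?_⟩
  · have h1 : LipschitzWith 1 (fun s : ℝ => (s, min s x)) := by
      have : LipschitzWith 1 (fun s : ℝ => min s x) := by
        simpa using LipschitzWith.id.min (LipschitzWith.const x)
      simpa using LipschitzWith.prodMk LipschitzWith.id this
    exact h1.lipschitzOnWith
  · simp [min_eq_left hx.le]
  · simp [min_eq_right (by linarith : x ≤ t)]
  · exact fun a _ b _ hab => hab
  · have hderiv_t : ∀ s : ℝ, deriv (fun s : ℝ => ((s, min s x) : ℝ × ℝ).1) s = 1 := by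
      intro s; simp
    have hmem := MeasureTheory.ae_restrict_mem (μ := MeasureTheory.volume)
      (measurableSet_Icc (a := (0:ℝ)) (b := t))
    have hne : ∀ᵐ s ∂(MeasureTheory.volume.restrict (Set.Icc (0:ℝ) t)), s ≠ x := by
      refine MeasureTheory.ae_restrict_of_ae ?_
      have : MeasureTheory.volume ({x} : Set ℝ) = 0 := MeasureTheory.measure_singleton x
      exact MeasureTheory.measure_mono_null (fun s hs => by simpa using hs) this
    filter_upwards [hmem, hne] with s hs hsne
    simp only [hderiv_t]
    rcases lt_or_gt_of_ne hsne with hlt | hgt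
    · -- s < x : the curve is (s, s), null
      have hev : (fun s : ℝ => min s x) =ᶠ[nhds s] fun s => s := by
        filter_upwards [Iio_mem_nhds hlt] with y hy
        exact min_eq_left hy.le
      have hd : deriv (fun s : ℝ => ((s, min s x) : ℝ × ℝ).2) s = 1 := by
        simpa using hev.deriv_eq
      have hmin : min s x = s := min_eq_left hlt.le
      have hs0 : (0:ℝ) ≤ s := hs.1
      have habs : |s| = s := abs_of_nonneg hs0
      have hrho : rho s (min s x) = 1 := by
        rw [hmin, rho, habs]
        simp
      rw [hd, hrho]
      norm_num
    · -- s > x : the curve is (s, x), timelike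
      have hev : (fun s : ℝ => min s x) =ᶠ[nhds s] fun _ => x := by
        filter_upwards [Ioi_mem_nhds hgt] with y hy
        exact min_eq_right hy.le
      have hd : deriv (fun s : ℝ => ((s, min s x) : ℝ × ℝ).2) s = 0 := by
        simpa using hev.deriv_eq
      rw [hd]
      have : (0:ℝ) ≤ rho s (min s x) := by
        have := Real.sqrt_nonneg (max (s - |min s x|) 0)
        rw [rho]; linarith
      nlinarith
end

section
/- In the region t > |x| > 0, the metric g = −dt² + (1 + sqrt(t − |x|))dx² satisfies Ric(v,v) ≥ 0 for every causal vector v; i.e., since Ric = (R/2)g in dimension 2 and the scalar curvature R is negative, Ric(v,v) = (R/2)g(v,v) ≥ 0 whenever g(v,v) ≤ 0. -/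
/-- in t > |x| > 0 the metric g = −dt² + ρ dx²,
ρ = 1 + √(t − |x|), satisfies Ric(v,v) = (R/2)·g(v,v) ≥ 0 for every causal
vector v, where R = −(ρ + (ρ−1)²)/(4ρ²(ρ−1)³) < 0. -/
theorem strong_energy_condition (t x : ℝ) (hx : x ≠ 0) (ht : |x| < t) :
    (-((1 + Real.sqrt (t - |x|)) + ((1 + Real.sqrt (t - |x|)) - 1) ^ 2) /
        (4 * (1 + Real.sqrt (t - |x|)) ^ 2 *
          ((1 + Real.sqrt (t - |x|)) - 1) ^ 3) < 0) ∧
    ∀ v : ℝ × ℝ,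
      -v.1 ^ 2 + (1 + Real.sqrt (t - |x|)) * v.2 ^ 2 ≤ 0 →
      (-((1 + Real.sqrt (t - |x|)) + ((1 + Real.sqrt (t - |x|)) - 1) ^ 2) /
          (4 * (1 + Real.sqrt (t - |x|)) ^ 2 *
            ((1 + Real.sqrt (t - |x|)) - 1) ^ 3)) / 2 *
        (-v.1 ^ 2 + (1 + Real.sqrt (t - |x|)) * v.2 ^ 2) ≥ 0 := by
  set s := Real.sqrt (t - |x|) with hs
  have hspos : 0 < s := Real.sqrt_pos.mpr (by
    have := abs_pos.mpr hx
    linarith)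
  have hR : -((1 + s) + ((1 + s) - 1) ^ 2) / (4 * (1 + s) ^ 2 * ((1 + s) - 1) ^ 3) < 0 := by
    apply div_neg_of_neg_of_pos
    · nlinarith
    · have : (1 + s) - 1 = s := by ring
      rw [this]; positivity
  refine ⟨hR, fun v hv => ?_⟩
  have h2 : -((1 + s) + ((1 + s) - 1) ^ 2) / (4 * (1 + s) ^ 2 * ((1 + s) - 1) ^ 3) / 2 < 0 := by
    linarith
  exact mul_nonneg_of_nonpos_of_nonpos h2.le hv
end
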